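/- Let r ≥ 3, t ≥ 3 be integers and c > 0, and let T(r,t,c) be the t×t tridiagonal matrix with zero diagonal except the last diagonal entry r−c, superdiagonal (r, r−1, ..., r−1), and subdiagonal (1, ..., 1, c). Then the characteristic polynomial of T(r,t,c) is (up to sign) (x − r)(G_{t−1}(x) + (c−1)G_{t−2}(x)). -/

import Mathlib

open Polynomial

/-- The orthogonal polynomials `F_j` with parameter `r`. -/
noncomputable def Fpoly (r : ℝ) : ℕ → Polynomial ℝ
  | 0 => 1
  | 1 => X
  | 2 => X ^ 2 - C r
  | (j + 3) => X * Fpoly r (j + 2) - C (r - 1) * Fpoly r (j + 1)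

/-- `G_j = ∑_{i=0}^j F_i`. -/
noncomputable def Gpoly (r : ℝ) (j : ℕ) : Polynomial ℝ :=
  ∑ i ∈ Finset.range (j + 1), Fpoly r i

/-- The tridiagonal matrix `T(r,t,c)`: zero diagonal except last entry `r - c`,
superdiagonal `(r, r-1, …, r-1)` and subdiagonal `(1, …, 1, c)`. -/
def Tmat (r c : ℝ) (t : ℕ) : Matrix (Fin t) (Fin t) ℝ :=
  Matrix.of fun i j =>
    if (j : ℕ) = (i : ℕ) + 1 then (if (i : ℕ) = 0 then r else r - 1)
    else if (i : ℕ) = (j : ℕ) + 1 then (if (i : ℕ) = t - 1 then c else 1)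
    else if i = j ∧ (i : ℕ) = t - 1 then r - c
    else 0

open Matrix in


lemma det_expand_first {R : Type*} [CommRing R] {n : ℕ} (M : Matrix (Fin (n+2)) (Fin (n+2)) R)
    (hrow : ∀ j : Fin (n+2), 2 ≤ (j:ℕ) → M 0 j = 0)
    (hcol : ∀ i : Fin (n+2), 2 ≤ (i:ℕ) → M i 0 = 0) :
    M.det = M 0 0 * (M.submatrix Fin.succ Fin.succ).det
      - M 0 1 * M 1 0 * (M.submatrix (Fin.succ ∘ Fin.succ) (Fin.succ ∘ Fin.succ)).det := by
  have hsa : ((1 : Fin (n+2)).succAbove ∘ Fin.succ) = Fin.succ ∘ Fin.succ := by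
    funext j
    simp [Fin.succAbove, Fin.lt_def]
  have hsa0 : (1 : Fin (n+2)).succAbove 0 = 0 := by
    simp [Fin.succAbove]
  rw [det_succ_row_zero, Fin.sum_univ_succ, Fin.sum_univ_succ]
  have hz : ∀ j : Fin n,
      (-1:R) ^ ((j.succ.succ : Fin (n+2)) : ℕ) * M 0 j.succ.succ *
        (M.submatrix Fin.succ (j.succ.succ).succAbove).det = 0 := by
    intro j
    rw [hrow j.succ.succ (by simp)]
    ring
  rw [Finset.sum_congr rfl (fun j _ => hz j), Finset.sum_const_zero, add_zero]
  have h1 : ((0:Fin (n+1)).succ : Fin (n+2)) = 1 := rfl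
  have inner : (M.submatrix Fin.succ ((0:Fin (n+1)).succ).succAbove).det
      = M 1 0 * (M.submatrix (Fin.succ ∘ Fin.succ) (Fin.succ ∘ Fin.succ)).det := by
    rw [h1, det_succ_column_zero, Fin.sum_univ_succ]
    have hz2 : ∀ i : Fin n,
        (-1:R) ^ ((i.succ : Fin (n+1)) : ℕ) *
          (M.submatrix Fin.succ (1 : Fin (n+2)).succAbove) i.succ 0 *
          ((M.submatrix Fin.succ (1 : Fin (n+2)).succAbove).submatrix i.succ.succAbove Fin.succ).det
          = 0 := by
      intro i
      have : (M.submatrix Fin.succ (1 : Fin (n+2)).succAbove) i.succ 0 = 0 := by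
        rw [Matrix.submatrix_apply, hsa0]
        exact hcol _ (by simp)
      rw [this]; ring
    rw [Finset.sum_congr rfl (fun i _ => hz2 i), Finset.sum_const_zero, add_zero]
    rw [Matrix.submatrix_apply, hsa0, Fin.succAbove_zero, Matrix.submatrix_submatrix, hsa]
    simp
  rw [inner, h1, Fin.succAbove_zero]
  simp
  ring

noncomputable def Jpoly (r : ℝ) : ℕ → Polynomial ℝ
  | 0 => 0
  | 1 => 1
  | (k + 2) => X * Jpoly r (k + 1) - C (r - 1) * Jpoly r k

noncomputable def Emat (r c : ℝ) (m : ℕ) : Matrix (Fin m) (Fin m) (Polynomial ℝ) :=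
  Matrix.of fun i j =>
    if (j:ℕ) = (i:ℕ) + 1 then -C (r-1)
    else if (i:ℕ) = (j:ℕ) + 1 then (if (i:ℕ) = m - 1 then -C c else -1)
    else if (i:ℕ) = (j:ℕ) then (if (i:ℕ) = m - 1 then X - C (r-c) else X)
    else 0

lemma Emat_submatrix (r c : ℝ) (m : ℕ) :
    (Emat r c (m+1)).submatrix Fin.succ Fin.succ = Emat r c m := by
  ext i j
  have hi := i.isLt
  simp only [Matrix.submatrix_apply, Emat, Matrix.of_apply, Fin.val_succ]
  split_ifs <;> first | rfl | omega

lemma Edet (r c : ℝ) (k : ℕ) :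
    (Emat r c (k+1)).det = (X - C (r-c)) * Jpoly r (k+1) - C c * C (r-1) * Jpoly r k := by
  induction k using Nat.strong_induction_on with
  | _ k ih =>
    match k with
    | 0 =>
      rw [Matrix.det_fin_one]
      simp [Emat, Jpoly]
    | 1 =>
      rw [Matrix.det_fin_two]
      simp only [Emat, Matrix.of_apply, Fin.val_zero, Fin.val_one, Jpoly]
      norm_num
      ring
    | (k+2) =>
      rw [det_expand_first]
      · rw [← Matrix.submatrix_submatrix]
        have h1 : (Emat r c (k+2)).submatrix Fin.succ Fin.succ = Emat r c (k+1) :=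
          Emat_submatrix r c (k+1)
        rw [Emat_submatrix, h1,
          ih (k+1) (by omega), ih k (by omega)]
        have e00 : Emat r c (k+3) 0 0 = X := by simp [Emat]
        have e01 : Emat r c (k+3) 0 1 = -C (r-1) := by simp [Emat]
        have e10 : Emat r c (k+3) 1 0 = -1 := by simp [Emat]
        rw [e00, e01, e10, show Jpoly r (k+3) = X * Jpoly r (k+2) - C (r-1) * Jpoly r (k+1) from rfl,
          show Jpoly r (k+2) = X * Jpoly r (k+1) - C (r-1) * Jpoly r k from rfl]
        ring
      · intro j hj
        simp only [Emat, Matrix.of_apply, Fin.val_zero]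
        split_ifs
        all_goals first | rfl | omega | simp_all
      · intro i hi
        simp only [Emat, Matrix.of_apply, Fin.val_zero]
        split_ifs
        all_goals first | rfl | omega | simp_all
        all_goals (rintro rfl; simp at hi)


lemma FJ (r : ℝ) (k : ℕ) :
    Fpoly r (k+1) = X * Jpoly r (k+1) - C r * Jpoly r k := by
  induction k using Nat.strong_induction_on with
  | _ k ih =>
    match k with
    | 0 => simp [Fpoly, Jpoly]
    | 1 => simp [Fpoly, Jpoly]; ring
    | (k+2) =>
      have h3 : Fpoly r (k+3) = X * Fpoly r (k+2) - C (r-1) * Fpoly r (k+1) := rfl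
      have j3 : Jpoly r (k+3) = X * Jpoly r (k+2) - C (r-1) * Jpoly r (k+1) := rfl
      have j2 : Jpoly r (k+2) = X * Jpoly r (k+1) - C (r-1) * Jpoly r k := rfl
      rw [h3, j3, j2, ih (k+1) (by omega), ih k (by omega), j2]
      ring

lemma Gkey (r : ℝ) (j : ℕ) :
    (X - C r) * Gpoly r (j+1) = Fpoly r (j+2) - C (r-1) * Fpoly r (j+1) := by
  induction j with
  | zero =>
    simp [Gpoly, Fpoly, Finset.sum_range_succ]
    ring
  | succ j ih =>
    have hG : Gpoly r (j+2) = Gpoly r (j+1) + Fpoly r (j+2) := by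
      simp [Gpoly, Finset.sum_range_succ]
    have hF : Fpoly r (j+3) = X * Fpoly r (j+2) - C (r-1) * Fpoly r (j+1) := rfl
    rw [show j+1+1 = j+2 from rfl, show j+1+2 = j+3 from rfl, hG, hF]
    simp only [map_sub, Polynomial.C_1] at ih ⊢
    linear_combination ih

lemma charmatrix_Tmat_submatrix (r c : ℝ) (n : ℕ) :
    (Matrix.charmatrix (Tmat r c (n+3))).submatrix Fin.succ Fin.succ = Emat r c (n+2) := by
  ext i j
  have hi := i.isLt
  simp only [Matrix.submatrix_apply, Matrix.charmatrix_apply, Matrix.diagonal_apply, Tmat,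
    Matrix.of_apply, Emat, Fin.val_succ, Fin.ext_iff]
  split_ifs <;> first | rfl | omega | simp_all

theorem charpoly_Tmat (r c : ℝ) (hr : 3 ≤ r) (hc : 0 < c) (t : ℕ) (ht : 3 ≤ t) :
    (Tmat r c t).charpoly =
      (X - C r) * (Gpoly r (t - 1) + C (c - 1) * Gpoly r (t - 2)) := by
  obtain ⟨n, rfl⟩ : ∃ n, t = n + 3 := ⟨t - 3, by omega⟩
  have hdet : (Tmat r c (n+3)).charpoly
      = Matrix.det (Matrix.charmatrix (Tmat r c (n+3))) := rfl
  rw [hdet, det_expand_first (n := n+1)]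
  · have hsub1 : (Matrix.charmatrix (Tmat r c (n+3))).submatrix Fin.succ Fin.succ
        = Emat r c (n+2) := charmatrix_Tmat_submatrix r c n
    have hsub2 : (Matrix.charmatrix (Tmat r c (n+3))).submatrix (Fin.succ ∘ Fin.succ)
        (Fin.succ ∘ Fin.succ) = Emat r c (n+1) := by
      rw [← Matrix.submatrix_submatrix, hsub1]
      exact Emat_submatrix r c (n+1)
    have e00 : Matrix.charmatrix (Tmat r c (n+3)) 0 0 = X := by
      rw [Matrix.charmatrix_apply_eq]
      have : Tmat r c (n+3) 0 0 = 0 := by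
        simp only [Tmat, Matrix.of_apply]
        split_ifs <;> first | rfl | omega | simp_all
      rw [this, map_zero, sub_zero]
    have e01 : Matrix.charmatrix (Tmat r c (n+3)) 0 1 = -C r := by
      rw [Matrix.charmatrix_apply_ne _ _ _ (by simp [Fin.ext_iff])]
      have : Tmat r c (n+3) 0 1 = r := by
        simp only [Tmat, Matrix.of_apply]
        split_ifs <;> first | rfl | omega | simp_all
      rw [this]
    have e10 : Matrix.charmatrix (Tmat r c (n+3)) 1 0 = -1 := by
      rw [Matrix.charmatrix_apply_ne _ _ _ (by simp [Fin.ext_iff])]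
      have : Tmat r c (n+3) 1 0 = 1 := by
        simp only [Tmat, Matrix.of_apply]
        split_ifs <;> first | rfl | omega | simp_all
      rw [this, Polynomial.C_1]
    rw [hsub1, hsub2, e00, e01, e10,
      show (n+2) = (n+1)+1 from rfl, Edet r c (n+1), Edet r c n]
    simp only [show n+3-1 = n+2 by omega, show n+3-2 = n+1 by omega]
    have hG2 : (X - C r) * Gpoly r (n+2) = Fpoly r (n+3) - C (r-1) * Fpoly r (n+2) :=
      Gkey r (n+1)
    have hG1 : (X - C r) * Gpoly r (n+1) = Fpoly r (n+2) - C (r-1) * Fpoly r (n+1) :=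
      Gkey r n
    have hF1 : Fpoly r (n+1) = X * Jpoly r (n+1) - C r * Jpoly r n := FJ r n
    have hF2 : Fpoly r (n+2) = X * Jpoly r (n+2) - C r * Jpoly r (n+1) := FJ r (n+1)
    have hF3 : Fpoly r (n+3) = X * Jpoly r (n+3) - C r * Jpoly r (n+2) := FJ r (n+2)
    have hJ3 : Jpoly r (n+3) = X * Jpoly r (n+2) - C (r-1) * Jpoly r (n+1) := rfl
    have hJ2 : Jpoly r (n+2) = X * Jpoly r (n+1) - C (r-1) * Jpoly r n := rfl
    have expand : (X - C r) * (Gpoly r (n+2) + C (c-1) * Gpoly r (n+1))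
        = (X - C r) * Gpoly r (n+2) + C (c-1) * ((X - C r) * Gpoly r (n+1)) := by ring
    rw [expand, hG2, hG1, hF3, hF2, hF1, hJ3, hJ2]
    simp only [map_sub, Polynomial.C_1]
    ring
  · intro j hj
    rw [Matrix.charmatrix_apply_ne _ _ _ (by simp [Fin.ext_iff]; omega)]
    have : Tmat r c (n+3) 0 j = 0 := by
      simp only [Tmat, Matrix.of_apply, Fin.ext_iff]
      split_ifs <;> first | rfl | omega | simp_all
    rw [this, map_zero, neg_zero]
  · intro i hi
    rw [Matrix.charmatrix_apply_ne _ _ _ (by rw [Ne, Fin.ext_iff, Fin.val_zero]; omega)]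
    have : Tmat r c (n+3) i 0 = 0 := by
      simp only [Tmat, Matrix.of_apply, Fin.ext_iff]
      split_ifs <;> first | rfl | omega | simp_all
    rw [this, map_zero, neg_zero]
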